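/- Let G be a multigraph on n ≥ 2 vertices with minimum cut value c ≥ 1, and let α ≥ 1 be a real number. Then the number of distinct α-minimum cuts of G is less than n^{2α}. -/

import Mathlib

open scoped Classical

/-- A multigraph on vertex type `V` is given by an edge-index type `E` together with a map
`ends : E → Sym2 V` assigning to each edge its (unordered) pair of endpoints; the hypothesis
`∀ e, ¬ (ends e).IsDiag` says that the two endpoints of every edge are distinct.
`survGraph ends F` is the simple graph on `V` whose adjacencies are given by the edges of the
multigraph that survive when the edges in `F` fail. -/
def survGraph {V E : Type} (ends : E → Sym2 V) (F : Finset E) : SimpleGraph V :=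
  SimpleGraph.fromRel (fun x y => ∃ e, e ∉ F ∧ ends e = s(x, y))

/-- The number of connected components of the graph surviving after the edges in `F` fail. -/
noncomputable def numComponents {V E : Type} (ends : E → Sym2 V) (F : Finset E) : ℕ :=
  Nat.card (survGraph ends F).ConnectedComponent

/-- Edge `e` crosses the 2-way cut determined by the vertex set `A` (one endpoint in `A`,
one endpoint outside `A`). -/
def crosses {V E : Type} (ends : E → Sym2 V) (A : Finset V) (e : E) : Prop :=
  (∃ x ∈ ends e, x ∈ A) ∧ (∃ x ∈ ends e, x ∉ A)

/-- The edge set of the 2-way cut determined by the vertex set `A`. -/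
noncomputable def cutEdges {V E : Type} [Fintype E] (ends : E → Sym2 V) (A : Finset V) :
    Finset E :=
  Finset.univ.filter (crosses ends A)

/-- The value of the 2-way cut determined by the vertex set `A`. -/
noncomputable def cutValue {V E : Type} [Fintype E] (ends : E → Sym2 V) (A : Finset V) : ℕ :=
  (cutEdges ends A).card

/-- When each edge fails independently with probability `p`, this is the probability that the
(random) set of failed edges is a member of `S`. -/
noncomputable def failurePr {E : Type} [Fintype E] (p : ℝ) (S : Finset (Finset E)) : ℝ :=
  ∑ F ∈ S, p ^ F.card * (1 - p) ^ (Fintype.card E - F.card)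

set_option linter.unusedSectionVars false
open Finset

section basic
variable {V E : Type} [Fintype V] [DecidableEq V] [Fintype E]

lemma kc_crosses_compl (ends : E → Sym2 V) (A : Finset V) (e : E) :
    crosses ends Aᶜ e ↔ crosses ends A e := by
  unfold crosses
  constructor <;> rintro ⟨⟨x, hx, hxA⟩, ⟨y, hy, hyA⟩⟩ <;>
    exact ⟨⟨y, hy, by simpa using hyA⟩, ⟨x, hx, by simpa using hxA⟩⟩

lemma kc_cutValue_compl (ends : E → Sym2 V) (A : Finset V) :
    cutValue ends Aᶜ = cutValue ends A := by
  unfold cutValue cutEdges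
  congr 1
  ext e
  simp [kc_crosses_compl]

lemma kc_sym2_exists (z : Sym2 V) : ∃ a b, z = s(a, b) := by
  induction z using Sym2.ind with
  | _ a b => exact ⟨a, b, rfl⟩

lemma kc_filter_mem_sym2_card {z : Sym2 V} (h : ¬ z.IsDiag) :
    (univ.filter (fun x => x ∈ z)).card = 2 := by
  induction z using Sym2.ind with
  | _ a b =>
    have hab : a ≠ b := by simpa [Sym2.mk_isDiag_iff] using h
    have : (univ.filter (fun x => x ∈ s(a, b))) = {a, b} := by
      ext x; simp [Sym2.mem_iff]
    rw [this, Finset.card_pair hab]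

/-- handshake: `n*c ≤ 2*m` -/
lemma kc_handshake (ends : E → Sym2 V) (hnd : ∀ e, ¬ (ends e).IsDiag)
    (hn : 2 ≤ Fintype.card V) (c : ℕ)
    (hmin : ∀ A : Finset V, A.Nonempty → Aᶜ.Nonempty → c ≤ cutValue ends A) :
    Fintype.card V * c ≤ 2 * Fintype.card E := by
  have hdeg : ∀ v : V, c ≤ (univ.filter (fun e => v ∈ ends e)).card := by
    intro v
    have h1 : ({v} : Finset V).Nonempty := singleton_nonempty v
    have h2 : ({v} : Finset V)ᶜ.Nonempty := by
      rw [← Finset.card_pos, Finset.card_compl, Finset.card_singleton]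
      omega
    have := hmin {v} h1 h2
    refine this.trans (le_of_eq ?_)
    unfold cutValue cutEdges
    congr 1
    ext e
    have hcr : crosses ends {v} e ↔ v ∈ ends e := by
      constructor
      · rintro ⟨⟨x, hx, hxA⟩, -⟩
        simpa using (Finset.mem_singleton.mp hxA) ▸ hx
      · intro hv
        refine ⟨⟨v, hv, Finset.mem_singleton_self v⟩, ?_⟩
        obtain ⟨a, b, hz⟩ := kc_sym2_exists (ends e)
        have hab : a ≠ b := by
          have := hnd e; rw [hz] at this; simpa [Sym2.mk_isDiag_iff] using this
        rcases Classical.em (a = v) with rfl | ha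
        · exact ⟨b, by simp [hz, Sym2.mem_iff], by simpa using hab.symm⟩
        · exact ⟨a, by simp [hz, Sym2.mem_iff], by simpa using ha⟩
    simp [Finset.mem_filter, hcr]
  have hsum : Fintype.card V * c ≤ ∑ v : V, (univ.filter (fun e => v ∈ ends e)).card := by
    calc Fintype.card V * c = (univ : Finset V).card * c := by rw [Finset.card_univ]
    _ = (univ : Finset V).card • c := by rw [smul_eq_mul]
    _ ≤ ∑ v : V, (univ.filter (fun e => v ∈ ends e)).card :=
        Finset.card_nsmul_le_sum _ _ _ (fun v _ => hdeg v)
  have hswap : ∑ v : V, (univ.filter (fun e => v ∈ ends e)).card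
      = ∑ e : E, (univ.filter (fun v : V => v ∈ ends e)).card := by
    simp only [Finset.card_filter]
    rw [Finset.sum_comm]
  have h2 : ∑ e : E, (univ.filter (fun v : V => v ∈ ends e)).card = 2 * Fintype.card E := by
    rw [Finset.sum_congr rfl (fun e _ => kc_filter_mem_sym2_card (hnd e))]
    simp [Finset.card_univ, mul_comm]
  omega

end basic

section contract
variable {V E : Type} [Fintype V] [DecidableEq V] [Fintype E]

/-- the contraction map sending `v` to `u`. -/
def cmap (u : V) {v : V} (hne : u ≠ v) (x : V) : {y : V // y ≠ v} :=
  if h : x = v then ⟨u, hne⟩ else ⟨x, h⟩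

lemma cmap_val (u : V) {v : V} (hne : u ≠ v) (x : {y : V // y ≠ v}) :
    cmap u hne x.val = x := by
  unfold cmap
  exact Subtype.ext (by rw [dif_neg x.2])

lemma cmap_u (u : V) {v : V} (hne : u ≠ v) : cmap u hne u = ⟨u, hne⟩ := by
  unfold cmap; rw [dif_neg hne]

lemma cmap_v (u : V) {v : V} (hne : u ≠ v) : cmap u hne v = ⟨u, hne⟩ := by
  unfold cmap; rw [dif_pos rfl]

/-- edge ends in the contracted graph -/
noncomputable def cends (ends : E → Sym2 V) (u : V) {v : V} (hne : u ≠ v)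
    (e : {e : E // ¬ ((ends e).map (cmap u hne)).IsDiag}) : Sym2 {y : V // y ≠ v} :=
  (ends e.val).map (cmap u hne)

/-- lift of a vertex subset of the contracted graph -/
noncomputable def cset (u : V) {v : V} (hne : u ≠ v) (A' : Finset {y : V // y ≠ v}) :
    Finset V :=
  univ.filter (fun x => cmap u hne x ∈ A')

lemma mem_cset (u : V) {v : V} (hne : u ≠ v) (A' : Finset {y : V // y ≠ v}) (x : V) :
    x ∈ cset u hne A' ↔ cmap u hne x ∈ A' := by
  unfold cset; simp

lemma cset_compl (u : V) {v : V} (hne : u ≠ v) (A' : Finset {y : V // y ≠ v}) :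
    cset u hne A'ᶜ = (cset u hne A')ᶜ := by
  ext x; simp [mem_cset]

lemma cset_nonempty (u : V) {v : V} (hne : u ≠ v) (A' : Finset {y : V // y ≠ v}) :
    (cset u hne A').Nonempty ↔ A'.Nonempty := by
  constructor
  · rintro ⟨x, hx⟩; exact ⟨_, (mem_cset u hne A' x).mp hx⟩
  · rintro ⟨x', hx'⟩
    exact ⟨x'.val, (mem_cset u hne A' x'.val).mpr (by rwa [cmap_val])⟩

lemma cset_inj (u : V) {v : V} (hne : u ≠ v) : Function.Injective (cset u hne) := by
  intro A' B' h
  ext x'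
  have := Finset.ext_iff.mp h x'.val
  rwa [mem_cset, mem_cset, cmap_val] at this

lemma crosses_cends (ends : E → Sym2 V) (u : V) {v : V} (hne : u ≠ v)
    (A' : Finset {y : V // y ≠ v}) (e : {e : E // ¬ ((ends e).map (cmap u hne)).IsDiag}) :
    crosses (cends ends u hne) A' e ↔ crosses ends (cset u hne A') e.val := by
  unfold crosses cends
  constructor
  · rintro ⟨⟨x', hx', hx'A⟩, ⟨y', hy', hy'A⟩⟩
    obtain ⟨x, hx, rfl⟩ := Sym2.mem_map.mp hx'
    obtain ⟨y, hy, rfl⟩ := Sym2.mem_map.mp hy'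
    exact ⟨⟨x, hx, (mem_cset u hne A' x).mpr hx'A⟩,
      ⟨y, hy, fun hc => hy'A ((mem_cset u hne A' y).mp hc)⟩⟩
  · rintro ⟨⟨x, hx, hxA⟩, ⟨y, hy, hyA⟩⟩
    exact ⟨⟨cmap u hne x, Sym2.mem_map.mpr ⟨x, hx, rfl⟩, (mem_cset u hne A' x).mp hxA⟩,
      ⟨cmap u hne y, Sym2.mem_map.mpr ⟨y, hy, rfl⟩,
        fun hc => hyA ((mem_cset u hne A' y).mpr hc)⟩⟩

lemma not_crosses_of_diag (ends : E → Sym2 V) (u : V) {v : V} (hne : u ≠ v)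
    (A' : Finset {y : V // y ≠ v}) (e : E) (hd : ((ends e).map (cmap u hne)).IsDiag) :
    ¬ crosses ends (cset u hne A') e := by
  obtain ⟨a, b, hz⟩ := kc_sym2_exists (ends e)
  have hmap : cmap u hne a = cmap u hne b := by
    rw [hz] at hd
    simpa [Sym2.map_pair_eq, Sym2.mk_isDiag_iff] using hd
  rintro ⟨⟨x, hx, hxA⟩, ⟨y, hy, hyA⟩⟩
  rw [hz] at hx hy
  have hiff : ∀ w, w ∈ s(a, b) → (w ∈ cset u hne A' ↔ cmap u hne a ∈ A') := by
    intro w hw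
    rcases Sym2.mem_iff.mp hw with rfl | rfl
    · exact mem_cset u hne A' w
    · rw [mem_cset, hmap]
  exact hyA (((hiff y hy).mpr ((hiff x hx).mp hxA)))

lemma cutValue_cends (ends : E → Sym2 V) (u : V) {v : V} (hne : u ≠ v)
    (A' : Finset {y : V // y ≠ v}) :
    cutValue (cends ends u hne) A' = cutValue ends (cset u hne A') := by
  unfold cutValue cutEdges
  apply Finset.card_bij (fun e _ => e.val)
  · intro e he
    simp only [Finset.mem_filter, Finset.mem_univ, true_and] at he ⊢
    exact (crosses_cends ends u hne A' e).mp he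
  · intro a ha b hb h
    exact Subtype.ext h
  · intro e he
    simp only [Finset.mem_filter, Finset.mem_univ, true_and] at he
    have hd : ¬ ((ends e).map (cmap u hne)).IsDiag :=
      fun hd => not_crosses_of_diag ends u hne A' e hd he
    exact ⟨⟨e, hd⟩, by simp [Finset.mem_filter, (crosses_cends ends u hne A' ⟨e, hd⟩).mpr he]⟩

lemma card_subtype_ne (v : V) : Fintype.card {y : V // y ≠ v} = Fintype.card V - 1 := by
  rw [Fintype.card_subtype_compl (· = v), Fintype.card_subtype_eq]

end contract

section avoid
variable {V E : Type} [Fintype V] [DecidableEq V] [Fintype E]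

lemma kc_not_crosses_iff (ends : E → Sym2 V) (A : Finset V) (u v : V) (e0 : E)
    (he0 : ends e0 = s(u, v)) :
    ¬ crosses ends A e0 ↔ (u ∈ A ↔ v ∈ A) := by
  unfold crosses
  rw [he0]
  simp only [Sym2.mem_iff]
  constructor
  · intro h
    by_contra hiff
    apply h
    rcases Classical.em (u ∈ A) with hu | hu <;> rcases Classical.em (v ∈ A) with hv | hv
    · exact absurd (iff_of_true hu hv) hiff
    · exact ⟨⟨u, Or.inl rfl, hu⟩, ⟨v, Or.inr rfl, hv⟩⟩
    · exact ⟨⟨v, Or.inr rfl, hv⟩, ⟨u, Or.inl rfl, hu⟩⟩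
    · exact absurd (iff_of_false hu hv) hiff
  · rintro hiff ⟨⟨x, hx, hxA⟩, ⟨y, hy, hyA⟩⟩
    have hx' : u ∈ A := by rcases hx with rfl | rfl; exacts [hxA, hiff.mpr hxA]
    have hy' : ¬ u ∈ A := by rcases hy with rfl | rfl; exacts [hyA, fun h => hyA (hiff.mp h)]
    exact hy' hx'

lemma kc_avoid_card (ends : E → Sym2 V) (α : ℝ) (c : ℕ) (u : V) {v : V} (hne : u ≠ v)
    (e0 : E) (he0 : ends e0 = s(u, v)) :
    ((univ.filter (fun A : Finset V =>
        A.Nonempty ∧ Aᶜ.Nonempty ∧ (cutValue ends A : ℝ) ≤ α * c)).filter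
        (fun A => ¬ crosses ends A e0)).card
    = (univ.filter (fun A' : Finset {y : V // y ≠ v} =>
        A'.Nonempty ∧ A'ᶜ.Nonempty ∧ (cutValue (cends ends u hne) A' : ℝ) ≤ α * c)).card := by
  have hd : ((ends e0).map (cmap u hne)).IsDiag := by
    rw [he0, Sym2.map_pair_eq, cmap_u, cmap_v, Sym2.mk_isDiag_iff]
  symm
  apply Finset.card_bij (fun A' _ => cset u hne A')
  · intro A' hA'
    simp only [Finset.mem_filter, Finset.mem_univ, true_and] at hA' ⊢
    obtain ⟨h1, h2, h3⟩ := hA'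
    refine ⟨⟨(cset_nonempty u hne A').mpr h1, ?_, ?_⟩, ?_⟩
    · rw [← cset_compl]; exact (cset_nonempty u hne A'ᶜ).mpr h2
    · rw [← cutValue_cends ends u hne A']; exact h3
    · exact not_crosses_of_diag ends u hne A' e0 hd
  · intro a ha b hb h
    exact cset_inj u hne h
  · intro A hA
    simp only [Finset.mem_filter, Finset.mem_univ, true_and] at hA
    obtain ⟨⟨h1, h2, h3⟩, h4⟩ := hA
    have huv : u ∈ A ↔ v ∈ A := (kc_not_crosses_iff ends A u v e0 he0).mp h4
    set A' : Finset {y : V // y ≠ v} := univ.filter (fun x' => x'.val ∈ A) with hA'def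
    have hset : cset u hne A' = A := by
      ext x
      rw [mem_cset]
      simp only [hA'def, Finset.mem_filter, Finset.mem_univ, true_and]
      unfold cmap
      rcases Classical.em (x = v) with rfl | hx
      · rw [dif_pos rfl]; exact huv
      · rw [dif_neg hx]
    refine ⟨A', ?_, hset⟩
    simp only [Finset.mem_filter, Finset.mem_univ, true_and]
    refine ⟨?_, ?_, ?_⟩
    · exact (cset_nonempty u hne A').mp (hset ▸ h1)
    · exact (cset_nonempty u hne A'ᶜ).mp (by rw [cset_compl, hset]; exact h2)
    · rw [cutValue_cends ends u hne A', hset]; exact h3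

end avoid

section arith
open Nat
open Finset

lemma kc_prod_Ioc_sub (k r : ℕ) (hk : k ≤ r) :
    ∀ n, r ≤ n → (∏ i ∈ Ioc r n, (i - k)) * (r - k)! = (n - k)! := by
  intro n hn
  induction n, hn using Nat.le_induction with
  | base => simp
  | succ n hn ih =>
    rw [Finset.prod_Ioc_succ_top (by omega : r ≤ n)]
    have h1 : n + 1 - k = (n - k) + 1 := by omega
    rw [h1, Nat.factorial_succ, ← ih]
    ring_nf

lemma kc_two_pow_le_factorial : ∀ r : ℕ, 2 ^ (r - 1) ≤ r ! := by
  intro r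
  induction r with
  | zero => simp
  | succ r ih =>
    rcases Nat.eq_zero_or_pos r with rfl | hr
    · simp
    · have h1 : r + 1 - 1 = (r - 1) + 1 := by omega
      rw [h1, pow_succ, Nat.factorial_succ]
      calc 2 ^ (r - 1) * 2 ≤ r ! * 2 := Nat.mul_le_mul_right _ ih
        _ ≤ (r + 1) * r ! := by rw [mul_comm]; exact Nat.mul_le_mul_right _ (by omega)

lemma kc_endpoint_r (r n : ℕ) (hr : 2 ≤ r) (h : r ≤ n) :
    (2 ^ (r - 1) - 1) * n ! < r ! * (n ^ r * (n - r)!) := by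
  rw [← Nat.factorial_mul_descFactorial h]
  have hd : 0 < n.descFactorial r := by
    rcases Nat.eq_zero_or_pos (n.descFactorial r) with hz | hz
    · exact absurd (Nat.descFactorial_eq_zero_iff_lt.mp hz) (by omega)
    · exact hz
  have hlt : 2 ^ (r - 1) - 1 < r ! := by
    have := kc_two_pow_le_factorial r
    have : (1:ℕ) ≤ 2 ^ (r - 1) := Nat.one_le_two_pow
    omega
  calc (2 ^ (r - 1) - 1) * ((n - r)! * n.descFactorial r)
      = (n - r)! * ((2 ^ (r - 1) - 1) * n.descFactorial r) := by ring
    _ < (n - r)! * (r ! * n ^ r) := by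
        apply mul_lt_mul_of_pos_left _ (Nat.factorial_pos _)
        calc (2 ^ (r - 1) - 1) * n.descFactorial r < r ! * n.descFactorial r :=
              mul_lt_mul_of_pos_right hlt hd
          _ ≤ r ! * n ^ r := Nat.mul_le_mul_left _ (Nat.descFactorial_le_pow _ _)
    _ = r ! * (n ^ r * (n - r)!) := by ring

lemma kc_endpoint_r1 (r n : ℕ) (hr : 1 ≤ r) (h : r - 1 ≤ n) :
    (2 ^ (r - 1) - 1) * n ! ≤ r ! * (n ^ (r - 1) * (n - (r - 1))!) := by
  rw [← Nat.factorial_mul_descFactorial h]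
  have hle : 2 ^ (r - 1) - 1 ≤ r ! := by
    have := kc_two_pow_le_factorial r
    omega
  calc (2 ^ (r - 1) - 1) * ((n - (r-1))! * n.descFactorial (r-1))
      = (n - (r-1))! * ((2 ^ (r - 1) - 1) * n.descFactorial (r-1)) := by ring
    _ ≤ (n - (r-1))! * (r ! * n ^ (r-1)) := by
        exact Nat.mul_le_mul_left _ (Nat.mul_le_mul hle (Nat.descFactorial_le_pow _ _))
    _ = r ! * (n ^ (r-1) * (n - (r-1))!) := by ring

end arith

section claimA
open Nat Finset Real

lemma kc_claimA (r n : ℕ) (hr : 2 ≤ r) (hn : 2 ≤ n) (α : ℝ)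
    (hup : 2 * α ≤ (r : ℝ)) (hlo : (r : ℝ) - 1 < 2 * α) :
    ((2:ℝ) ^ (r - 1) - 1) * ∏ i ∈ Ioc r n, ((i:ℝ) / ((i:ℝ) - 2 * α))
      < (n : ℝ) ^ (2 * α) := by
  have hr2 : (2:ℝ) ≤ (r:ℝ) := by exact_mod_cast hr
  have hα0 : 0 < 2 * α := by linarith
  have hcast_r1 : ((r - 1 : ℕ) : ℝ) = (r : ℝ) - 1 := by
    push_cast [Nat.cast_sub (by omega : 1 ≤ r)]; ring
  have hbase : ((2:ℝ) ^ (r - 1) - 1) < (2:ℝ) ^ ((r:ℝ) - 1) := by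
    rw [← hcast_r1, ← Real.rpow_natCast 2 (r-1)]
    linarith
  rcases Classical.em (r ≤ n) with hrn | hrn
  swap
  · -- small case: empty product
    rw [Finset.Ioc_eq_empty (by omega : ¬ r < n), Finset.prod_empty, mul_one]
    calc ((2:ℝ) ^ (r - 1) - 1) < (2:ℝ) ^ ((r:ℝ) - 1) := hbase
      _ ≤ (2:ℝ) ^ (2 * α) := Real.rpow_le_rpow_of_exponent_le one_le_two (le_of_lt hlo)
      _ ≤ (n:ℝ) ^ (2 * α) := Real.rpow_le_rpow (by norm_num) (by exact_mod_cast hn) (le_of_lt hα0)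
  -- main case
  set t : ℝ := 2 * α - ((r:ℝ) - 1) with ht_def
  have ht0 : 0 < t := by simp [ht_def]; linarith
  have ht1 : t ≤ 1 := by simp [ht_def]; linarith
  have hipos : ∀ i ∈ Ioc r n, (0:ℝ) < (i:ℝ) - 2 * α := by
    intro i hi
    have : r < i := (Finset.mem_Ioc.mp hi).1
    have : (r:ℝ) < (i:ℝ) := by exact_mod_cast this
    linarith
  have hi1pos : ∀ i ∈ Ioc r n, (0:ℝ) < (i:ℝ) - ((r:ℝ) - 1) := by
    intro i hi
    have : r < i := (Finset.mem_Ioc.mp hi).1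
    have : (r:ℝ) < (i:ℝ) := by exact_mod_cast this
    linarith
  have hirpos : ∀ i ∈ Ioc r n, (0:ℝ) ≤ (i:ℝ) - (r:ℝ) := by
    intro i hi
    have : r < i := (Finset.mem_Ioc.mp hi).1
    have : (r:ℝ) < (i:ℝ) := by exact_mod_cast this
    linarith
  set D : ℝ := ∏ i ∈ Ioc r n, (i:ℝ) with hD_def
  set Pb : ℝ := ∏ i ∈ Ioc r n, ((i:ℝ) - 2 * α) with hPb_def
  set P1 : ℝ := ∏ i ∈ Ioc r n, ((i:ℝ) - ((r:ℝ) - 1)) with hP1_def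
  set Pr : ℝ := ∏ i ∈ Ioc r n, ((i:ℝ) - (r:ℝ)) with hPr_def
  have hPbpos : 0 < Pb := Finset.prod_pos hipos
  have hP1pos : 0 < P1 := Finset.prod_pos hi1pos
  have hDpos : 0 < D := Finset.prod_pos (fun i hi => by
    have h1 : r < i := (Finset.mem_Ioc.mp hi).1
    exact_mod_cast (by omega : 0 < i))
  set L : ℝ := ((2:ℝ) ^ (r - 1) - 1) * D with hL_def
  have h2pow2 : (2:ℝ) ≤ (2:ℝ) ^ (r - 1) := by
    calc (2:ℝ) = 2 ^ 1 := (pow_one 2).symm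
      _ ≤ 2 ^ (r - 1) := pow_le_pow_right₀ (by norm_num) (by omega)
  have h2pow : (1:ℝ) ≤ (2:ℝ) ^ (r - 1) := by linarith
  have hLpos : 0 < L := by
    apply mul_pos _ hDpos
    linarith
  -- cast identities
  have hcastD : D * (r ! : ℝ) = (n ! : ℝ) := by
    have h0 := kc_prod_Ioc_sub 0 r (by omega) n hrn
    simp only [Nat.sub_zero] at h0
    calc D * (r ! : ℝ) = ((∏ i ∈ Ioc r n, i : ℕ) : ℝ) * (r ! : ℝ) := by
          rw [hD_def, Nat.cast_prod]
      _ = (n ! : ℝ) := by rw [← Nat.cast_mul, h0]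
  have hcastP1 : P1 = ((n - (r-1))! : ℝ) := by
    have h0 := kc_prod_Ioc_sub (r-1) r (by omega) n hrn
    have hrr : r - (r - 1) = 1 := by omega
    rw [hrr, Nat.factorial_one, mul_one] at h0
    rw [hP1_def, ← h0, Nat.cast_prod]
    apply Finset.prod_congr rfl
    intro i hi
    have hri : r < i := (Finset.mem_Ioc.mp hi).1
    rw [Nat.cast_sub (by omega : r - 1 ≤ i), hcast_r1]
  have hcastPr : Pr = ((n - r)! : ℝ) := by
    have h0 := kc_prod_Ioc_sub r r le_rfl n hrn
    simp only [Nat.sub_self, Nat.factorial_zero, mul_one] at h0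
    rw [hPr_def, ← h0, Nat.cast_prod]
    apply Finset.prod_congr rfl
    intro i hi
    have hri : r < i := (Finset.mem_Ioc.mp hi).1
    rw [Nat.cast_sub (by omega : r ≤ i)]
  -- endpoint inequalities (real form)
  have hcast_coeff : (((2:ℕ) ^ (r - 1) - 1 : ℕ) : ℝ) = (2:ℝ) ^ (r - 1) - 1 := by
    rw [Nat.cast_sub Nat.one_le_two_pow]
    push_cast
    ring
  have hEr : L < (n:ℝ) ^ (r:ℕ) * Pr := by
    have hnat := kc_endpoint_r r n hr hrn
    have hreal : (((2:ℕ) ^ (r-1) - 1 : ℕ) : ℝ) * (n ! : ℝ)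
        < (r ! : ℝ) * ((n:ℝ) ^ (r:ℕ) * ((n - r)! : ℝ)) := by exact_mod_cast hnat
    rw [hcast_coeff] at hreal
    have hfact : (0:ℝ) < (r ! : ℝ) := by exact_mod_cast Nat.factorial_pos r
    rw [← hcastD] at hreal
    rw [hcastPr]
    nlinarith [hreal, hfact]
  have hE1 : L ≤ (n:ℝ) ^ (r-1 : ℕ) * P1 := by
    have hnat := kc_endpoint_r1 r n (by omega) (by omega)
    have hreal : (((2:ℕ) ^ (r-1) - 1 : ℕ) : ℝ) * (n ! : ℝ)
        ≤ (r ! : ℝ) * ((n:ℝ) ^ (r-1:ℕ) * ((n - (r-1))! : ℝ)) := by exact_mod_cast hnat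
    rw [hcast_coeff] at hreal
    have hfact : (0:ℝ) < (r ! : ℝ) := by exact_mod_cast Nat.factorial_pos r
    rw [← hcastD] at hreal
    rw [hcastP1]
    nlinarith [hreal, hfact]
  -- AM-GM per factor
  have hAMGM : P1 ^ (1 - t) * Pr ^ t ≤ Pb := by
    have hfac : ∀ i ∈ Ioc r n,
        ((i:ℝ) - ((r:ℝ) - 1)) ^ (1 - t) * ((i:ℝ) - (r:ℝ)) ^ t ≤ (i:ℝ) - 2 * α := by
      intro i hi
      have h := Real.geom_mean_le_arith_mean2_weighted (by linarith : (0:ℝ) ≤ 1 - t)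
        (le_of_lt ht0) (le_of_lt (hi1pos i hi)) (hirpos i hi) (by ring)
      calc ((i:ℝ) - ((r:ℝ) - 1)) ^ (1 - t) * ((i:ℝ) - (r:ℝ)) ^ t
          ≤ (1 - t) * ((i:ℝ) - ((r:ℝ) - 1)) + t * ((i:ℝ) - (r:ℝ)) := h
        _ = (i:ℝ) - 2 * α := by rw [ht_def]; ring
    calc P1 ^ (1 - t) * Pr ^ t
        = (∏ i ∈ Ioc r n, ((i:ℝ) - ((r:ℝ) - 1)) ^ (1 - t))
          * (∏ i ∈ Ioc r n, ((i:ℝ) - (r:ℝ)) ^ t) := by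
          rw [hP1_def, hPr_def,
            ← Real.finset_prod_rpow _ _ (fun i hi => le_of_lt (hi1pos i hi)) _,
            ← Real.finset_prod_rpow _ _ (fun i hi => hirpos i hi) _]
      _ = ∏ i ∈ Ioc r n, (((i:ℝ) - ((r:ℝ) - 1)) ^ (1 - t) * ((i:ℝ) - (r:ℝ)) ^ t) := by
          rw [Finset.prod_mul_distrib]
      _ ≤ Pb := Finset.prod_le_prod (fun i hi =>
            mul_nonneg (Real.rpow_nonneg (le_of_lt (hi1pos i hi)) _)
              (Real.rpow_nonneg (hirpos i hi) _)) hfac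
  -- combine
  have hnR : (0:ℝ) < (n:ℝ) := by positivity
  have hkey : L < (n:ℝ) ^ (2 * α) * Pb := by
    have hXpos : 0 < (n:ℝ) ^ (r-1:ℕ) * P1 := by positivity
    have step1 : L = L ^ (1 - t) * L ^ t := by
      rw [← Real.rpow_add hLpos]
      norm_num
    have step2 : L ^ (1 - t) * L ^ t
        < ((n:ℝ) ^ (r-1:ℕ) * P1) ^ (1 - t) * ((n:ℝ) ^ (r:ℕ) * Pr) ^ t := by
      apply mul_lt_mul' (Real.rpow_le_rpow (le_of_lt hLpos) hE1 (by linarith))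
        (Real.rpow_lt_rpow (le_of_lt hLpos) hEr ht0)
        (Real.rpow_nonneg (le_of_lt hLpos) _)
        (Real.rpow_pos_of_pos hXpos _)
    have step3 : ((n:ℝ) ^ (r-1:ℕ) * P1) ^ (1 - t) * ((n:ℝ) ^ (r:ℕ) * Pr) ^ t
        = (n:ℝ) ^ (2 * α) * (P1 ^ (1 - t) * Pr ^ t) := by
      rw [Real.mul_rpow (by positivity) (le_of_lt hP1pos),
        Real.mul_rpow (by positivity) (Finset.prod_nonneg hirpos),
        ← Real.rpow_natCast (n:ℝ) (r-1), ← Real.rpow_natCast (n:ℝ) r,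
        ← Real.rpow_mul (le_of_lt hnR), ← Real.rpow_mul (le_of_lt hnR)]
      have hexp : ((r-1:ℕ):ℝ) * (1 - t) + (r:ℝ) * t = 2 * α := by
        rw [hcast_r1, ht_def]; ring
      rw [show (n:ℝ) ^ (((r-1:ℕ):ℝ) * (1 - t)) * P1 ^ (1-t) * ((n:ℝ) ^ ((r:ℝ) * t) * Pr ^ t)
          = (n:ℝ) ^ (((r-1:ℕ):ℝ) * (1 - t)) * (n:ℝ) ^ ((r:ℝ) * t) * (P1 ^ (1-t) * Pr ^ t)
          from by ring,
        ← Real.rpow_add hnR, hexp]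
    calc L = L ^ (1 - t) * L ^ t := step1
      _ < ((n:ℝ) ^ (r-1:ℕ) * P1) ^ (1 - t) * ((n:ℝ) ^ (r:ℕ) * Pr) ^ t := step2
      _ = (n:ℝ) ^ (2 * α) * (P1 ^ (1 - t) * Pr ^ t) := step3
      _ ≤ (n:ℝ) ^ (2 * α) * Pb := by
          apply mul_le_mul_of_nonneg_left hAMGM (Real.rpow_nonneg (le_of_lt hnR) _)
  -- finish: divide by Pb
  have hprod : ∏ i ∈ Ioc r n, ((i:ℝ) / ((i:ℝ) - 2 * α)) = D / Pb := by
    rw [hD_def, hPb_def, Finset.prod_div_distrib]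
  rw [hprod, ← mul_div_assoc, div_lt_iff₀ hPbpos]
  exact hkey
end claimA

section mainrec
open Finset

lemma kc_rec (n : ℕ) : ∀ {V E : Type} [Fintype V] [DecidableEq V] [Fintype E]
    (ends : E → Sym2 V), (∀ e, ¬ (ends e).IsDiag) → Fintype.card V = n →
    2 ≤ Fintype.card V → ∀ (c : ℕ), 1 ≤ c →
    (∀ A : Finset V, A.Nonempty → Aᶜ.Nonempty → c ≤ cutValue ends A) →
    ∀ (α : ℝ), 1 ≤ α → ∀ (r : ℕ), 2 ≤ r → 2 * α ≤ (r : ℝ) →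
    ((Finset.univ.filter (fun A : Finset V =>
        A.Nonempty ∧ Aᶜ.Nonempty ∧ (cutValue ends A : ℝ) ≤ α * c)).card : ℝ)
      ≤ 2 * (((2:ℝ) ^ (r - 1) - 1) * ∏ i ∈ Finset.Ioc r n, ((i:ℝ) / ((i:ℝ) - 2 * α))) := by
  induction n using Nat.strong_induction_on with
  | _ n IH =>
  intro V E _ _ _ ends hnd hcard hn c hc hmin α hα r hr hra
  have hnV : Nonempty V := Fintype.card_pos_iff.mp (by omega)
  set S : Finset (Finset V) := Finset.univ.filter (fun A : Finset V =>
      A.Nonempty ∧ Aᶜ.Nonempty ∧ (cutValue ends A : ℝ) ≤ α * c) with hS_def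
  rcases Classical.em (n ≤ r) with hnr | hnr
  · -- base case: n ≤ r, trivial bound by the number of all proper subsets
    have hsub : S ⊆ univ \ {∅, (univ : Finset V)} := by
      intro A hA
      simp only [hS_def, Finset.mem_filter] at hA
      obtain ⟨-, h1, h2, -⟩ := hA
      rw [Finset.mem_sdiff]
      refine ⟨Finset.mem_univ _, ?_⟩
      simp only [Finset.mem_insert, Finset.mem_singleton]
      push_neg
      refine ⟨h1, ?_⟩
      rintro rfl
      simp at h2
    have hne0 : (∅ : Finset V) ≠ univ := fun h => Finset.univ_nonempty.ne_empty h.symm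
    have hcard2 : ({∅, (univ : Finset V)} : Finset (Finset V)).card = 2 :=
      Finset.card_pair hne0
    have hcardS : S.card ≤ 2 ^ n - 2 := by
      calc S.card ≤ (univ \ {∅, (univ : Finset V)}).card := Finset.card_le_card hsub
        _ = 2 ^ n - 2 := by
          rw [Finset.card_sdiff_of_subset (by intro x _; exact Finset.mem_univ x), hcard2,
            Finset.card_univ, Fintype.card_finset, hcard]
    have h2n : (2:ℕ) ≤ 2 ^ n := by
      calc (2:ℕ) = 2 ^ 1 := rfl
        _ ≤ 2 ^ n := Nat.pow_le_pow_right (by norm_num) (by omega)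
    have hSR : (S.card : ℝ) ≤ (2:ℝ) ^ n - 2 := by
      calc (S.card : ℝ) ≤ ((2 ^ n - 2 : ℕ) : ℝ) := by exact_mod_cast hcardS
        _ = (2:ℝ) ^ n - 2 := by
          rw [Nat.cast_sub h2n]
          push_cast
          ring
    rw [Finset.Ioc_eq_empty (by omega : ¬ r < n), Finset.prod_empty, mul_one]
    have hre : 2 * ((2:ℝ) ^ (r - 1) - 1) = (2:ℝ) ^ r - 2 := by
      have : (2:ℝ) * 2 ^ (r - 1) = 2 ^ r := by
        rw [← pow_succ']
        congr 1
        omega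
      linarith
    rw [hre]
    have : (2:ℝ) ^ n ≤ (2:ℝ) ^ r := pow_le_pow_right₀ (by norm_num) hnr
    linarith
  · -- inductive step: r < n
    obtain ⟨k, rfl⟩ : ∃ k, n = k + 1 := ⟨n - 1, by omega⟩
    have hrk : r ≤ k := by omega
    set m : ℕ := Fintype.card E with hm_def
    have hhs : (k + 1) * c ≤ 2 * m := hcard ▸ kc_handshake ends hnd hn c hmin
    have hmpos : 0 < m := by nlinarith
    have hEne : (univ : Finset E).Nonempty := by
      rw [← Finset.card_pos, Finset.card_univ]
      omega
    set B : ℝ := 2 * (((2:ℝ) ^ (r - 1) - 1) * ∏ i ∈ Finset.Ioc r k,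
        ((i:ℝ) / ((i:ℝ) - 2 * α))) with hB_def
    have h2pow : (1:ℝ) ≤ (2:ℝ) ^ (r - 1) := one_le_pow₀ (by norm_num)
    have hB0 : 0 ≤ B := by
      rw [hB_def]
      apply mul_nonneg (by norm_num)
      apply mul_nonneg (by linarith)
      apply Finset.prod_nonneg
      intro i hi
      have hri : r < i := (Finset.mem_Ioc.mp hi).1
      have hiR : (r:ℝ) < (i:ℝ) := by exact_mod_cast hri
      have : 0 < (i:ℝ) - 2 * α := by linarith
      positivity
    -- per-edge bound via contraction and IH
    have hedge : ∀ e : E, ((S.filter (fun A => ¬ crosses ends A e)).card : ℝ) ≤ B := by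
      intro e
      obtain ⟨u, v, hz⟩ := kc_sym2_exists (ends e)
      have hne : u ≠ v := by
        have := hnd e; rw [hz] at this; simpa [Sym2.mk_isDiag_iff] using this
      rw [hS_def, kc_avoid_card ends α c u hne e hz]
      have hcard' : Fintype.card {y : V // y ≠ v} = k := by
        rw [card_subtype_ne, hcard]
        omega
      have hmin' : ∀ A' : Finset {y : V // y ≠ v}, A'.Nonempty → A'ᶜ.Nonempty →
          c ≤ cutValue (cends ends u hne) A' := by
        intro A' h1 h2
        rw [cutValue_cends]
        refine hmin _ ((cset_nonempty u hne A').mpr h1) ?_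
        rw [← cset_compl]
        exact (cset_nonempty u hne A'ᶜ).mpr h2
      exact IH k (by omega) (cends ends u hne) (fun e' => e'.2) hcard'
        (by omega) c hc hmin' α hα r hr hra
    -- double counting
    have hcv_le : ∀ A : Finset V, cutValue ends A ≤ m := by
      intro A
      unfold cutValue cutEdges
      calc (filter (crosses ends A) univ).card ≤ (univ : Finset E).card :=
            Finset.card_filter_le _ _
        _ = m := Finset.card_univ
    have havoid : ∀ A : Finset V,
        (univ.filter (fun e => ¬ crosses ends A e)).card = m - cutValue ends A := by
      intro A
      rw [Finset.filter_not, Finset.card_sdiff_of_subset (Finset.filter_subset _ _), Finset.card_univ]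
      rfl
    have hswap : ∑ A ∈ S, (m - cutValue ends A)
        = ∑ e : E, (S.filter (fun A => ¬ crosses ends A e)).card := by
      calc ∑ A ∈ S, (m - cutValue ends A)
          = ∑ A ∈ S, (univ.filter (fun e => ¬ crosses ends A e)).card :=
            Finset.sum_congr rfl (fun A _ => (havoid A).symm)
        _ = ∑ A ∈ S, ∑ e : E, if ¬ crosses ends A e then 1 else 0 := by
            refine Finset.sum_congr rfl (fun A _ => ?_)
            rw [Finset.card_filter]
        _ = ∑ e : E, ∑ A ∈ S, if ¬ crosses ends A e then 1 else 0 := Finset.sum_comm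
        _ = ∑ e : E, (S.filter (fun A => ¬ crosses ends A e)).card := by
            refine Finset.sum_congr rfl (fun e _ => ?_)
            rw [Finset.card_filter]
    have hsumR : ∑ A ∈ S, ((m:ℝ) - (cutValue ends A : ℝ))
        = ((∑ A ∈ S, (m - cutValue ends A) : ℕ) : ℝ) := by
      rw [Nat.cast_sum]
      refine Finset.sum_congr rfl (fun A _ => ?_)
      rw [Nat.cast_sub (hcv_le A)]
    have hlower : (S.card : ℝ) * ((m:ℝ) - α * c) ≤ ∑ A ∈ S, ((m:ℝ) - (cutValue ends A : ℝ)) := by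
      have := Finset.card_nsmul_le_sum S (fun A => (m:ℝ) - (cutValue ends A : ℝ))
        ((m:ℝ) - α * c) (fun A hA => by
          show (m:ℝ) - α * c ≤ (m:ℝ) - (cutValue ends A : ℝ)
          simp only [hS_def, Finset.mem_filter] at hA
          have := hA.2.2.2
          linarith)
      rwa [nsmul_eq_mul] at this
    have hupper : ((∑ A ∈ S, (m - cutValue ends A) : ℕ) : ℝ) ≤ (m:ℝ) * B := by
      rw [hswap]
      rw [Nat.cast_sum]
      calc ∑ e : E, ((S.filter (fun A => ¬ crosses ends A e)).card : ℝ)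
          ≤ ∑ _e : E, B := Finset.sum_le_sum (fun e _ => hedge e)
        _ = (m:ℝ) * B := by rw [Finset.sum_const, Finset.card_univ, nsmul_eq_mul]
    -- arithmetic to close
    have hkR : ((k:ℝ) + 1) * c ≤ 2 * (m:ℝ) := by exact_mod_cast hhs
    have hcR : (1:ℝ) ≤ (c:ℝ) := by exact_mod_cast hc
    have hnR : (r:ℝ) + 1 ≤ (k:ℝ) + 1 := by
      have : (r:ℝ) ≤ (k:ℝ) := by exact_mod_cast hrk
      linarith
    have hn2α : 0 < ((k:ℝ) + 1) - 2 * α := by linarith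
    have hsubpos : 0 < (m:ℝ) - α * c := by nlinarith
    have hmain : (m:ℝ) ≤ ((k:ℝ) + 1) * ((m:ℝ) - α * c) / (((k:ℝ) + 1) - 2 * α) := by
      rw [le_div_iff₀ hn2α]
      nlinarith [mul_le_mul_of_nonneg_left hkR (by linarith : (0:ℝ) ≤ α)]
    have hchain : (S.card : ℝ) * ((m:ℝ) - α * c)
        ≤ (B * (((k:ℝ) + 1) / (((k:ℝ) + 1) - 2 * α))) * ((m:ℝ) - α * c) := by
      calc (S.card : ℝ) * ((m:ℝ) - α * c)
          ≤ ∑ A ∈ S, ((m:ℝ) - (cutValue ends A : ℝ)) := hlower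
        _ = ((∑ A ∈ S, (m - cutValue ends A) : ℕ) : ℝ) := hsumR
        _ ≤ (m:ℝ) * B := hupper
        _ = B * (m:ℝ) := mul_comm _ _
        _ ≤ B * (((k:ℝ) + 1) * ((m:ℝ) - α * c) / (((k:ℝ) + 1) - 2 * α)) :=
            mul_le_mul_of_nonneg_left hmain hB0
        _ = (B * (((k:ℝ) + 1) / (((k:ℝ) + 1) - 2 * α))) * ((m:ℝ) - α * c) := by ring
    have hfinal : (S.card : ℝ) ≤ B * (((k:ℝ) + 1) / (((k:ℝ) + 1) - 2 * α)) :=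
      le_of_mul_le_mul_right hchain hsubpos
    refine hfinal.trans (le_of_eq ?_)
    rw [hB_def, Finset.prod_Ioc_succ_top hrk]
    push_cast
    ring
end mainrec

section final
open Finset
variable {V : Type} [Fintype V] [DecidableEq V]

lemma kc_two_mul_image_card (S : Finset (Finset V)) (hcl : ∀ A ∈ S, Aᶜ ∈ S)
    (hne : ∀ A ∈ S, A ≠ Aᶜ) :
    2 * (S.image (fun A => ({A, Aᶜ} : Finset (Finset V)))).card ≤ S.card := by
  rw [Finset.card_eq_sum_card_image (fun A => ({A, Aᶜ} : Finset (Finset V))) S]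
  calc 2 * (S.image (fun A => ({A, Aᶜ} : Finset (Finset V)))).card
      = ∑ _b ∈ S.image (fun A => ({A, Aᶜ} : Finset (Finset V))), 2 := by
        rw [Finset.sum_const, smul_eq_mul, mul_comm]
    _ ≤ ∑ b ∈ S.image (fun A => ({A, Aᶜ} : Finset (Finset V))),
        (S.filter (fun A => ({A, Aᶜ} : Finset (Finset V)) = b)).card := by
      apply Finset.sum_le_sum
      intro b hb
      obtain ⟨A, hA, hfA⟩ := Finset.mem_image.mp hb
      have hsub : ({A, Aᶜ} : Finset (Finset V)) ⊆
          S.filter (fun B => ({B, Bᶜ} : Finset (Finset V)) = b) := by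
        intro B hB
        rcases Finset.mem_insert.mp hB with rfl | hB
        · exact Finset.mem_filter.mpr ⟨hA, hfA⟩
        · rw [Finset.mem_singleton] at hB
          subst hB
          refine Finset.mem_filter.mpr ⟨hcl A hA, ?_⟩
          rw [compl_compl, Finset.pair_comm]
          exact hfA
      calc 2 = ({A, Aᶜ} : Finset (Finset V)).card := (Finset.card_pair (hne A hA)).symm
        _ ≤ _ := Finset.card_le_card hsub
end final

theorem stmt0 {V E : Type} [Fintype V] [DecidableEq V] [Fintype E]
    (ends : E → Sym2 V) (hnd : ∀ e, ¬ (ends e).IsDiag)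
    (hn : 2 ≤ Fintype.card V) (c : ℕ) (hc : 1 ≤ c)
    (hmin : ∀ A : Finset V, A.Nonempty → Aᶜ.Nonempty → c ≤ cutValue ends A)
    (hex : ∃ A : Finset V, A.Nonempty ∧ Aᶜ.Nonempty ∧ cutValue ends A = c)
    (α : ℝ) (hα : 1 ≤ α) :
    (((Finset.univ.filter (fun A : Finset V =>
          A.Nonempty ∧ Aᶜ.Nonempty ∧ (cutValue ends A : ℝ) ≤ α * c)).image
            (fun A => ({A, Aᶜ} : Finset (Finset V)))).card : ℝ)
      < (Fintype.card V : ℝ) ^ (2 * α) := by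
  set S : Finset (Finset V) := Finset.univ.filter (fun A : Finset V =>
      A.Nonempty ∧ Aᶜ.Nonempty ∧ (cutValue ends A : ℝ) ≤ α * c) with hS_def
  set r : ℕ := ⌈2 * α⌉₊ with hr_def
  have hr2 : 2 ≤ r := by
    have : 1 < r := Nat.lt_ceil.mpr (by push_cast; linarith)
    omega
  have hup : 2 * α ≤ (r : ℝ) := Nat.le_ceil _
  have hlo : (r : ℝ) - 1 < 2 * α := by
    have := Nat.ceil_lt_add_one (by linarith : (0:ℝ) ≤ 2 * α)
    rw [← hr_def] at this
    linarith
  have hrec := kc_rec (Fintype.card V) ends hnd rfl hn c hc hmin α hα r hr2 hup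
  have hclaim := kc_claimA r (Fintype.card V) hr2 hn α hup hlo
  have hcl : ∀ A ∈ S, Aᶜ ∈ S := by
    intro A hA
    simp only [hS_def, Finset.mem_filter] at hA ⊢
    obtain ⟨-, h1, h2, h3⟩ := hA
    refine ⟨Finset.mem_univ _, h2, by rwa [compl_compl], by rwa [kc_cutValue_compl]⟩
  have hnec : ∀ A ∈ S, A ≠ Aᶜ := by
    intro A hA
    simp only [hS_def, Finset.mem_filter] at hA
    obtain ⟨-, ⟨x, hx⟩, -, -⟩ := hA
    intro h
    have : x ∈ Aᶜ := h ▸ hx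
    exact (Finset.mem_compl.mp this) hx
  have hpair := kc_two_mul_image_card S hcl hnec
  have hpairR : 2 * ((S.image (fun A => ({A, Aᶜ} : Finset (Finset V)))).card : ℝ)
      ≤ (S.card : ℝ) := by exact_mod_cast hpair
  rw [← hS_def] at hrec
  show ((S.image (fun A => ({A, Aᶜ} : Finset (Finset V)))).card : ℝ)
      < (Fintype.card V : ℝ) ^ (2 * α)
  linarith
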